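/- For a strictly positive probability vector p, the Hill number D_q(p) = (∑ p_i^q)^{1/(1-q)} converges to 1/min_i(p_i) as q → -∞. -/

import Mathlib

set_option maxHeartbeats 800000


open Finset Filter

theorem hill_number_tendsto_inv_min
    (S : ℕ) [NeZero S] (p : Fin S → ℝ)
    (hp : ∀ i, 0 < p i) (hsum : ∑ i, p i = 1) :
    Tendsto (fun q : ℝ => (∑ i, p i ^ q) ^ (1 / (1 - q))) atBot
      (nhds (1 / Finset.univ.inf' Finset.univ_nonempty p)) := by
  set m := Finset.univ.inf' Finset.univ_nonempty p with hm_def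
  obtain ⟨i0, -, hi0⟩ := Finset.exists_mem_eq_inf' Finset.univ_nonempty p
  have hmle : ∀ i, m ≤ p i := fun i => Finset.inf'_le p (Finset.mem_univ i)
  have hm : 0 < m := by rw [hm_def, hi0]; exact hp i0
  have hSpos : (0:ℝ) < (S:ℝ) := by
    exact_mod_cast Nat.pos_of_ne_zero (NeZero.ne S)
  -- limit of the exponent q/(1-q) → -1
  have h1q : Tendsto (fun q : ℝ => 1 - q) atBot atTop := by
    simp only [sub_eq_add_neg]
    exact tendsto_atTop_add_const_left atBot 1 tendsto_neg_atBot_atTop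
  have hinv : Tendsto (fun q : ℝ => 1 / (1 - q)) atBot (nhds 0) := by
    simpa [one_div, Pi.inv_def] using h1q.inv_tendsto_atTop
  have hqe : Tendsto (fun q : ℝ => q * (1 / (1 - q))) atBot (nhds (-1)) := by
    have heq : (fun q : ℝ => q * (1 / (1 - q))) =ᶠ[atBot] (fun q => -1 + 1 / (1 - q)) := by
      filter_upwards [eventually_lt_atBot (0:ℝ)] with q hq
      have : (1:ℝ) - q ≠ 0 := by linarith
      field_simp
      ring
    have : Tendsto (fun q : ℝ => -1 + 1 / (1 - q)) atBot (nhds (-1 + 0)) :=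
      tendsto_const_nhds.add hinv
    simpa using this.congr' heq.symm
  -- m ^ (q/(1-q)) → 1/m
  have hmlim : Tendsto (fun q : ℝ => m ^ (q * (1 / (1 - q)))) atBot (nhds (1 / m)) := by
    have hc : ContinuousAt (fun t : ℝ => m ^ t) (-1) :=
      (Real.continuousAt_const_rpow hm.ne')
    have := hc.tendsto.comp hqe
    simpa [Real.rpow_neg_one, one_div, Function.comp_def] using this
  -- S ^ (1/(1-q)) → 1
  have hSlim : Tendsto (fun q : ℝ => (S:ℝ) ^ (1 / (1 - q))) atBot (nhds 1) := by
    have hc : ContinuousAt (fun t : ℝ => (S:ℝ) ^ t) 0 :=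
      Real.continuousAt_const_rpow hSpos.ne'
    have := hc.tendsto.comp hinv
    simpa [Function.comp_def] using this
  have hup : Tendsto (fun q : ℝ => (S:ℝ) ^ (1 / (1 - q)) * m ^ (q * (1 / (1 - q))))
      atBot (nhds (1 / m)) := by
    simpa using hSlim.mul hmlim
  refine tendsto_of_tendsto_of_tendsto_of_le_of_le' hmlim hup ?_ ?_
  · filter_upwards [eventually_lt_atBot (0:ℝ)] with q hq
    have he : (0:ℝ) < 1 / (1 - q) := div_pos one_pos (by linarith)
    have hle : m ^ q ≤ ∑ i, p i ^ q := by
      calc m ^ q = p i0 ^ q := by rw [hm_def, hi0]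
      _ ≤ ∑ i, p i ^ q := Finset.single_le_sum
          (fun i _ => (Real.rpow_pos_of_pos (hp i) q).le) (Finset.mem_univ i0)
    calc m ^ (q * (1 / (1 - q))) = (m ^ q) ^ (1 / (1 - q)) := Real.rpow_mul hm.le _ _
    _ ≤ (∑ i, p i ^ q) ^ (1 / (1 - q)) :=
        Real.rpow_le_rpow (Real.rpow_pos_of_pos hm q).le hle he.le
  · filter_upwards [eventually_lt_atBot (0:ℝ)] with q hq
    have he : (0:ℝ) < 1 / (1 - q) := div_pos one_pos (by linarith)
    have hle : ∑ i, p i ^ q ≤ (S:ℝ) * m ^ q := by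
      calc ∑ i, p i ^ q ≤ ∑ _i : Fin S, m ^ q :=
          Finset.sum_le_sum fun i _ =>
            Real.rpow_le_rpow_of_nonpos hm (hmle i) hq.le
      _ = (S:ℝ) * m ^ q := by simp [mul_comm]
    calc (∑ i, p i ^ q) ^ (1 / (1 - q)) ≤ ((S:ℝ) * m ^ q) ^ (1 / (1 - q)) := by
          refine Real.rpow_le_rpow ?_ hle he.le
          exact Finset.sum_nonneg fun i _ => (Real.rpow_pos_of_pos (hp i) q).le
    _ = (S:ℝ) ^ (1 / (1 - q)) * m ^ (q * (1 / (1 - q))) := by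
          rw [Real.mul_rpow hSpos.le (Real.rpow_pos_of_pos hm q).le,
            ← Real.rpow_mul hm.le]
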